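/- Let (X, ρ) be a finite semimetric space partitioned as X = Z_1 ⊔ ... ⊔ Z_n. Define Λ = ⋃_i {unordered pairs {x,y} ⊆ Z_i with ρ(x,y) > r}. Then the number of unordered r-antichains of order k in X is at most ∑_{s ≥ 0} σ_{k-2s}(|Z_1|,...,|Z_n|)·|Λ|^s, where σ_m is the m-th elementary symmetric polynomial and the sum is over integers s with 0 ≤ 2s ≤ k. -/

import Mathlib

set_option linter.unusedSectionVars false

open Finset List

namespace Stmt9

variable {ι : Type*}

def pairup : List ι → List (ι × ι) × List ι
  | [] => ([], [])
  | [a] => ([], [a])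
  | a :: b :: rest => ((a, b) :: (pairup rest).1, (pairup rest).2)

theorem pairup_perm (l : List ι) :
    ((pairup l).1.flatMap fun q => [q.1, q.2]) ++ (pairup l).2 ~ l := by
  induction l using pairup.induct with
  | case1 => simp [pairup]
  | case2 a => simp [pairup]
  | case3 a b rest ih =>
      have : pairup (a :: b :: rest) = ((a, b) :: (pairup rest).1, (pairup rest).2) := rfl
      rw [this]
      simp only [List.flatMap_cons]
      exact (ih.cons b).cons a

theorem pairup_length (l : List ι) :
    l.length = 2 * (pairup l).1.length + (pairup l).2.length := by
  induction l using pairup.induct with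
  | case1 => simp [pairup]
  | case2 a => simp [pairup]
  | case3 a b rest ih => simp only [pairup, List.length_cons]; omega

theorem pairup_left_length (l : List ι) : (pairup l).2.length ≤ 1 := by
  induction l using pairup.induct with
  | case1 => simp [pairup]
  | case2 a => simp [pairup]
  | case3 a b rest ih => simpa [pairup] using ih

theorem pairup_ne {l : List ι} (h : l.Nodup) : ∀ q ∈ (pairup l).1, q.1 ≠ q.2 := by
  induction l using pairup.induct with
  | case1 => simp [pairup]
  | case2 a => simp [pairup]
  | case3 a b rest ih =>
      intro q hq
      simp only [pairup, List.mem_cons] at hq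
      rcases hq with rfl | hq
      · simp only [List.nodup_cons, List.mem_cons] at h
        exact fun hab => h.1 (Or.inl hab)
      · exact ih (h.of_cons.of_cons) q hq

theorem pairup_mem_iff {l : List ι} {x : ι} :
    x ∈ l ↔ (∃ q ∈ (pairup l).1, x = q.1 ∨ x = q.2) ∨ x ∈ (pairup l).2 := by
  rw [← (pairup_perm l).mem_iff]
  simp [List.mem_flatMap, or_comm, eq_comm]

theorem pairup_left_nodup {l : List ι} (h : l.Nodup) : (pairup l).2.Nodup :=
  ((pairup_perm l).symm.nodup h).of_append_right

theorem eq_singleton_of_len_le_one {l : List ι} {x : ι} (hx : x ∈ l) (h : l.length ≤ 1) :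
    l = [x] := by
  match l, hx with
  | [y], hx => simp_all
  | y :: z :: t, _ => simp at h

section Parts

variable [DecidableEq ι] {n : ℕ} (p : ι → Fin n)

noncomputable def pairsAt (S : Finset ι) (i : Fin n) : List (ι × ι) :=
  (pairup ((S.filter fun x => p x = i).toList)).1

noncomputable def leftAt (S : Finset ι) (i : Fin n) : List ι :=
  (pairup ((S.filter fun x => p x = i).toList)).2

noncomputable def sVal (S : Finset ι) : ℕ := ∑ i, (pairsAt p S i).length

noncomputable def Edges (S : Finset ι) : List (ι × ι) := (List.ofFn fun i => pairsAt p S i).flatten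

noncomputable def Wset (S : Finset ι) : Finset ι := univ.biUnion fun i => (leftAt p S i).toFinset

variable {p}

theorem mem_leftAt {x : ι} {i : Fin n} {S : Finset ι} (h : x ∈ leftAt p S i) :
    x ∈ S ∧ p x = i := by
  have : x ∈ (S.filter fun x => p x = i).toList :=
    pairup_mem_iff.mpr (Or.inr h)
  simpa using Finset.mem_toList.mp this

theorem mem_pairsAt {q : ι × ι} {i : Fin n} {S : Finset ι} (h : q ∈ pairsAt p S i) :
    q.1 ∈ S ∧ q.2 ∈ S ∧ p q.1 = i ∧ p q.2 = i ∧ q.1 ≠ q.2 := by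
  have h1 : q.1 ∈ (S.filter fun x => p x = i).toList :=
    pairup_mem_iff.mpr (Or.inl ⟨q, h, Or.inl rfl⟩)
  have h2 : q.2 ∈ (S.filter fun x => p x = i).toList :=
    pairup_mem_iff.mpr (Or.inl ⟨q, h, Or.inr rfl⟩)
  have hne := pairup_ne (Finset.nodup_toList _) q h
  simp only [Finset.mem_toList, Finset.mem_filter] at h1 h2
  exact ⟨h1.1, h2.1, h1.2, h2.2, hne⟩

theorem mem_Wset {x : ι} {S : Finset ι} :
    x ∈ Wset p S ↔ x ∈ leftAt p S (p x) := by
  constructor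
  · intro h
    simp only [Wset, Finset.mem_biUnion, List.mem_toFinset] at h
    obtain ⟨j, -, hj⟩ := h
    rwa [(mem_leftAt hj).2]
  · intro h
    simp only [Wset, Finset.mem_biUnion, List.mem_toFinset]
    exact ⟨p x, Finset.mem_univ _, h⟩

theorem length_Edges (S : Finset ι) : (Edges p S).length = sVal p S := by
  simp [Edges, sVal, List.length_flatten, List.map_ofFn, Function.comp_def, List.sum_ofFn]

theorem mem_Edges_iff {q : ι × ι} {S : Finset ι} :
    q ∈ Edges p S ↔ ∃ i, q ∈ pairsAt p S i := by
  simp only [Edges, List.mem_flatten, List.mem_ofFn, Set.mem_range]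
  constructor
  · rintro ⟨l, ⟨i, rfl⟩, hq⟩; exact ⟨i, hq⟩
  · rintro ⟨i, hq⟩; exact ⟨_, ⟨i, rfl⟩, hq⟩

theorem leftAt_nodup (S : Finset ι) (i : Fin n) : (leftAt p S i).Nodup :=
  pairup_left_nodup (Finset.nodup_toList _)

theorem card_S_eq (S : Finset ι) :
    S.card = 2 * sVal p S + ∑ i, (leftAt p S i).length := by
  have h0 : S.card = ∑ i : Fin n, (S.filter fun x => p x = i).card :=
    Finset.card_eq_sum_card_fiberwise (fun x _ => Finset.mem_univ _)
  rw [h0, sVal, Finset.mul_sum, ← Finset.sum_add_distrib]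
  refine Finset.sum_congr rfl fun i _ => ?_
  rw [← Finset.length_toList]
  exact pairup_length _

theorem card_Wset (S : Finset ι) :
    (Wset p S).card = ∑ i, (leftAt p S i).length := by
  rw [Wset, Finset.card_biUnion]
  · exact Finset.sum_congr rfl fun i _ => List.toFinset_card_of_nodup (leftAt_nodup S i)
  · intro i _ j _ hij
    simp only [Finset.disjoint_left, List.mem_toFinset]
    intro a ha ha'
    exact hij ((mem_leftAt ha).2 ▸ (mem_leftAt ha').2.symm ▸ rfl)

variable (p)

noncomputable def tOf (S : Finset ι) : Finset (Fin n) := (Wset p S).image p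

variable {p}

theorem left_ne_nil {S : Finset ι} {i : Fin n} (hi : i ∈ tOf p S) : leftAt p S i ≠ [] := by
  simp only [tOf, Finset.mem_image] at hi
  obtain ⟨x, hx, rfl⟩ := hi
  exact List.ne_nil_of_mem (mem_Wset.mp hx)

variable (p)

noncomputable def fOf (S : Finset ι) : ∀ i ∈ tOf p S, ι := fun i hi => (leftAt p S i).head (left_ne_nil hi)

noncomputable def eOf (S : Finset ι) : Fin (sVal p S) → Finset ι := fun j =>
  let q := (Edges p S).get (j.cast (length_Edges S).symm)
  {q.1, q.2}

variable {p}

theorem leftAt_eq_singleton {x : ι} {S : Finset ι} (h : x ∈ leftAt p S (p x)) :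
    leftAt p S (p x) = [x] :=
  eq_singleton_of_len_le_one h (pairup_left_length _)

theorem Wset_eq (S : Finset ι) :
    Wset p S = (tOf p S).attach.image fun a => fOf p S a.1 a.2 := by
  ext x
  simp only [Finset.mem_image, Finset.mem_attach, true_and, Subtype.exists]
  constructor
  · intro hx
    have hl := mem_Wset.mp hx
    have hmem : p x ∈ tOf p S := Finset.mem_image.mpr ⟨x, hx, rfl⟩
    refine ⟨p x, hmem, ?_⟩
    simp [fOf, leftAt_eq_singleton hl]
  · rintro ⟨i, hi, rfl⟩
    have : (leftAt p S i).head (left_ne_nil hi) ∈ leftAt p S i := List.head_mem _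
    simp only [Wset, Finset.mem_biUnion]
    exact ⟨i, Finset.mem_univ _, List.mem_toFinset.mpr this⟩

theorem injOn_p_Wset (S : Finset ι) : Set.InjOn p (Wset p S) := by
  intro x hx y hy hxy
  have hx' := mem_Wset.mp (by simpa using hx)
  have hy' := mem_Wset.mp (by simpa using hy)
  rw [← hxy] at hy'
  have := leftAt_eq_singleton hx'
  rw [this] at hy'
  exact (List.mem_singleton.mp hy').symm

theorem card_tOf (S : Finset ι) : (tOf p S).card = (Wset p S).card :=
  Finset.card_image_of_injOn (injOn_p_Wset S)

theorem S_eq (S : Finset ι) :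
    S = Wset p S ∪ univ.biUnion (eOf p S) := by
  ext x
  simp only [Finset.mem_union, Finset.mem_biUnion, Finset.mem_univ, true_and]
  have hre : (∃ j, x ∈ eOf p S j) ↔ ∃ q ∈ Edges p S, x = q.1 ∨ x = q.2 := by
    constructor
    · rintro ⟨j, hj⟩
      refine ⟨(Edges p S).get (j.cast (length_Edges S).symm), List.get_mem _ _, ?_⟩
      simpa [eOf] using hj
    · rintro ⟨q, hq, hx⟩
      obtain ⟨j, hj⟩ := List.mem_iff_get.mp hq
      refine ⟨j.cast (length_Edges S), ?_⟩
      simp only [eOf, Fin.cast_cast, Fin.cast_eq_self, hj]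
      rcases hx with rfl | rfl <;> simp
  rw [hre]
  constructor
  · intro hx
    have hx' : x ∈ (S.filter fun y => p y = p x).toList := by
      simp [Finset.mem_toList, Finset.mem_filter, hx]
    rcases pairup_mem_iff.mp hx' with ⟨q, hq, hxq⟩ | hl
    · exact Or.inr ⟨q, mem_Edges_iff.mpr ⟨p x, hq⟩, hxq⟩
    · exact Or.inl (mem_Wset.mpr hl)
  · rintro (hx | ⟨q, hq, hxq⟩)
    · exact (mem_leftAt (mem_Wset.mp hx)).1
    · obtain ⟨i, hi⟩ := mem_Edges_iff.mp hq
      have := mem_pairsAt hi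
      rcases hxq with rfl | rfl
      · exact this.1
      · exact this.2.1

end Parts

end Stmt9

abbrev Stmt9.Enc (ι : Type*) (n : ℕ) :=
  Σ s : ℕ, (Σ t : Finset (Fin n), ∀ a ∈ t, ι) × (Fin s → Finset ι)

set_option maxHeartbeats 1000000 in
open Stmt9 Finset in
/-- Upper bound on the number of unordered r-antichains of order k in terms of
elementary symmetric polynomials of the part sizes and the number |Λ| of
within-part long-or-medium pairs. -/
theorem stmt_9 {ι : Type*} [Fintype ι] (r : ℝ) (hr : 0 < r)
    (ρ : ι → ι → ℝ) (hsymm : ∀ x y, ρ x y = ρ y x)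
    (n k : ℕ) (Z : Fin n → Finset ι)
    (hdisj : ∀ i j, i ≠ j → Disjoint (Z i) (Z j))
    (hcover : ∀ x : ι, ∃ i, x ∈ Z i) :
    Set.ncard {S : Finset ι | S.card = k ∧
        ∀ x ∈ S, ∀ y ∈ S, x ≠ y → r < ρ x y}
    ≤ ∑ s ∈ Finset.range (k / 2 + 1),
        (∑ t ∈ (Finset.univ : Finset (Fin n)).powersetCard (k - 2 * s),
          ∏ i ∈ t, (Z i).card) *
        (Set.ncard {e : Finset ι | e.card = 2 ∧ (∃ i, e ⊆ Z i) ∧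
          ∀ x ∈ e, ∀ y ∈ e, x ≠ y → r < ρ x y}) ^ s := by
  classical
  set Λ : Set (Finset ι) := {e | e.card = 2 ∧ (∃ i, e ⊆ Z i) ∧
      ∀ x ∈ e, ∀ y ∈ e, x ≠ y → r < ρ x y} with hΛdef
  set A : Set (Finset ι) := {S | S.card = k ∧
      ∀ x ∈ S, ∀ y ∈ S, x ≠ y → r < ρ x y} with hAdef
  have hAfin : A.Finite := Set.toFinite _
  have hΛfin : Λ.Finite := Set.toFinite _
  rw [Set.ncard_eq_toFinset_card A hAfin, Set.ncard_eq_toFinset_card Λ hΛfin]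
  -- the partition function
  obtain ⟨p, hp⟩ : ∃ p : ι → Fin n, ∀ x, x ∈ Z (p x) :=
    ⟨fun x => (hcover x).choose, fun x => (hcover x).choose_spec⟩
  have hpZ : ∀ x i, x ∈ Z i → p x = i := by
    intro x i hx
    by_contra hne
    exact (Finset.disjoint_left.mp (hdisj i (p x) (fun h => hne h.symm)) hx) (hp x)
  -- the target finset
  set T : Finset (Enc ι n) := (Finset.range (k / 2 + 1)).sigma (fun s =>
      ((Finset.univ.powersetCard (k - 2 * s)).sigma fun t => t.pi fun i => Z i) ×ˢ
      (Fintype.piFinset fun _ : Fin s => hΛfin.toFinset)) with hT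
  have hTcard : T.card = ∑ s ∈ Finset.range (k / 2 + 1),
      (∑ t ∈ (Finset.univ : Finset (Fin n)).powersetCard (k - 2 * s),
        ∏ i ∈ t, (Z i).card) * (hΛfin.toFinset.card) ^ s := by
    rw [hT, Finset.card_sigma]
    refine Finset.sum_congr rfl fun s _ => ?_
    rw [Finset.card_product, Finset.card_sigma, Fintype.card_piFinset]
    simp [Finset.card_pi]
  rw [← hTcard]
  -- the encoding map
  refine Finset.card_le_card_of_injOn
    (fun S => (⟨sVal p S, (⟨tOf p S, fOf p S⟩, eOf p S)⟩ : Enc ι n)) ?_ ?_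
  · -- maps into T
    intro S hS
    rw [Finset.mem_coe, Set.Finite.mem_toFinset] at hS
    obtain ⟨hk, hanti⟩ := hS
    have hcardeq : k = 2 * sVal p S + (Wset p S).card := by
      rw [← hk, card_S_eq (p := p) S, card_Wset S]
    show (⟨sVal p S, (⟨tOf p S, fOf p S⟩, eOf p S)⟩ : Enc ι n) ∈ T
    rw [hT]
    simp only [Finset.mem_sigma, Finset.mem_product, Finset.mem_powersetCard,
      Finset.mem_pi, Fintype.mem_piFinset, Finset.mem_range]
    refine ⟨?_, ⟨⟨Finset.subset_univ _, ?_⟩, ?_⟩, ?_⟩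
    · have : sVal p S ≤ k / 2 := Nat.le_div_iff_mul_le (by norm_num) |>.mpr (by omega)
      omega
    · rw [card_tOf S]
      omega
    · intro i hi
      have hmem : fOf p S i hi ∈ leftAt p S i := List.head_mem _
      have h2 := (mem_leftAt hmem).2
      have h3 := hp (fOf p S i hi)
      rwa [h2] at h3
    · intro j
      rw [Set.Finite.mem_toFinset]
      have hq : (Edges p S).get (j.cast (length_Edges S).symm) ∈ Edges p S :=
        List.get_mem _ _
      set q := (Edges p S).get (j.cast (length_Edges S).symm) with hqdef
      obtain ⟨i, hqi⟩ := mem_Edges_iff.mp hq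
      obtain ⟨h1, h2, h3, h4, h5⟩ := mem_pairsAt hqi
      have heq : eOf p S j = {q.1, q.2} := rfl
      rw [heq]
      refine ⟨?_, ⟨i, ?_⟩, ?_⟩
      · rw [Finset.card_insert_of_notMem (by simp [h5]), Finset.card_singleton]
      · intro x hx
        rcases Finset.mem_insert.mp hx with rfl | hx
        · rw [← h3]; exact hp _
        · rw [Finset.mem_singleton.mp hx, ← h4]; exact hp _
      · intro x hx y hy hxy
        have hxS : x ∈ S := by
          rcases Finset.mem_insert.mp hx with rfl | hx
          · exact h1
          · rw [Finset.mem_singleton.mp hx]; exact h2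
        have hyS : y ∈ S := by
          rcases Finset.mem_insert.mp hy with rfl | hy
          · exact h1
          · rw [Finset.mem_singleton.mp hy]; exact h2
        exact hanti x hxS y hyS hxy
  · -- injective
    intro S hS S' hS' heq
    have heq' : (⟨sVal p S, (⟨tOf p S, fOf p S⟩, eOf p S)⟩ : Enc ι n)
        = ⟨sVal p S', (⟨tOf p S', fOf p S'⟩, eOf p S')⟩ := heq
    clear heq
    have h2 : (⟨tOf p S, fOf p S⟩ : Σ t : Finset (Fin n), ∀ a ∈ t, ι) = ⟨tOf p S', fOf p S'⟩ :=
      congrArg (fun x : Enc ι n => x.2.1) heq'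
    have hW : Wset p S = Wset p S' := by
      have h3 := congrArg
        (fun y : Σ t : Finset (Fin n), ∀ a ∈ t, ι => y.1.attach.image fun a => y.2 a.1 a.2) h2
      simp only at h3
      rw [Wset_eq S, Wset_eq S']
      exact h3
    have hE : (Finset.univ.biUnion (eOf p S) : Finset ι) = Finset.univ.biUnion (eOf p S') := by
      have h4 := congrArg (fun x : Enc ι n => (Finset.univ : Finset (Fin x.1)).biUnion x.2.2) heq'
      simpa only using h4
    rw [S_eq (p := p) S, S_eq (p := p) S', hW, hE]
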